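/- (Lemma 4.1) In the deterministic hard instance, for every policy π and every level h ∈ {1,…,H} there exists θ_h ∈ ℝ^d such that Q_h(c, a) = ⟨θ_h, φ(c, a)⟩ for all states c ∈ {1,…,d̂+1} and actions a ∈ {a₁, a₂}; in particular one may take θ_H = r₀·(e₁ + ⋯ + e_d) and, for h < H, θ_h = Σ_{c=1}^{d̂} r₀·d̂^{(H−h)/2}·e_c + Σ_{c=1}^{d̂} Q_h(c, a₂)·e_{c+d̂}. -/

import Mathlib

open scoped RealInnerProductSpace

/-- Expected reward at level `h` (1-indexed) of the deterministic hard instance.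
States are indexed by `c : Fin (d̂ + 1)`, where indices `< d̂` correspond to the states
`1, …, d̂` and the index `d̂` corresponds to the special state `d̂ + 1`. -/
noncomputable def detReward (dh H : ℕ) (r0 : ℝ) (h : ℕ) (c : Fin (dh + 1)) : ℝ :=
  if h = H then (if (c : ℕ) = dh then r0 * Real.sqrt dh else r0)
  else (if (c : ℕ) = dh then r0 * (Real.sqrt dh - 1) * Real.sqrt dh ^ (H - h) else 0)

/-- Transition of the deterministic hard instance: action `false` (= a₁) leads to the
special state `d̂ + 1`, action `true` (= a₂) keeps the same state index. -/
def detNext (dh : ℕ) (c : Fin (dh + 1)) (a : Bool) : Fin (dh + 1) :=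
  if a then c else ⟨dh, Nat.lt_succ_self dh⟩

/-- `detQaux dh H r0 π t` is the Q-function at level `H - t`, defined by backward recursion:
at the last level it is the expected reward, and otherwise it is the expected reward plus the
next-level Q-value at the action chosen by the policy `π`. -/
noncomputable def detQaux (dh H : ℕ) (r0 : ℝ) (π : ℕ → Fin (dh + 1) → Bool) :
    ℕ → Fin (dh + 1) → Bool → ℝ
  | 0, c, _ => detReward dh H r0 H c
  | t + 1, c, a =>
      detReward dh H r0 (H - (t + 1)) c +
        detQaux dh H r0 π t (detNext dh c a) (π (H - t) (detNext dh c a))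

/-- The Q-function of the policy `π` at level `h ∈ {1, …, H}`. -/
noncomputable def detQ (dh H : ℕ) (r0 : ℝ) (π : ℕ → Fin (dh + 1) → Bool) (h : ℕ) :
    Fin (dh + 1) → Bool → ℝ :=
  detQaux dh H r0 π (H - h)

/-- Feature map of the deterministic hard instance (`d = 2 * d̂`): `φ(c, a₁) = e_c`,
`φ(c, a₂) = e_{c + d̂}` for `c ≤ d̂`, and `φ(d̂+1, a) = d̂^{-1/2} (e₁ + ⋯ + e_{d̂})`. -/
noncomputable def detPhi (dh : ℕ) (e : Fin (2 * dh) → EuclideanSpace ℝ (Fin (2 * dh)))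
    (c : Fin (dh + 1)) (a : Bool) : EuclideanSpace ℝ (Fin (2 * dh)) :=
  if hc : (c : ℕ) < dh then
    (if a then e ⟨(c : ℕ) + dh, by omega⟩ else e ⟨(c : ℕ), by omega⟩)
  else (Real.sqrt dh)⁻¹ • ∑ j : Fin dh, e ⟨(j : ℕ), by have := j.isLt; omega⟩

/-- Lemma 4.1: in the deterministic hard instance, for every policy `π` and every level
`h ∈ {1, …, H}` there is `θ_h ∈ ℝ^d` with `Q_h(c, a) = ⟪θ_h, φ(c, a)⟫` for all states and
actions; one may take `θ_H = r₀ (e₁ + ⋯ + e_d)` and, for `h < H`,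
`θ_h = ∑_{c=1}^{d̂} r₀ d̂^{(H-h)/2} e_c + ∑_{c=1}^{d̂} Q_h(c, a₂) e_{c+d̂}`. -/
lemma detNext_self (dh : ℕ) (a : Bool) :
    detNext dh ⟨dh, Nat.lt_succ_self dh⟩ a = ⟨dh, Nat.lt_succ_self dh⟩ := by
  cases a <;> rfl

lemma qaux_special (dh H : ℕ) (r0 : ℝ) (π : ℕ → Fin (dh+1) → Bool) :
    ∀ t, t < H → ∀ a, detQaux dh H r0 π t ⟨dh, Nat.lt_succ_self dh⟩ a
      = r0 * Real.sqrt dh ^ (t+1) := by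
  intro t
  induction t with
  | zero =>
    intro ht a
    simp [detQaux, detReward, pow_one]
  | succ t ih =>
    intro ht a
    rw [detQaux, detNext_self, ih (by omega)]
    have h1 : H - (t + 1) ≠ H := by omega
    have h2 : H - (H - (t + 1)) = t + 1 := by omega
    rw [detReward, if_neg h1, if_pos rfl, h2, pow_succ _ (t+1)]
    ring

lemma sum_smul_inner {n m : ℕ} (b : OrthonormalBasis (Fin n) ℝ (EuclideanSpace ℝ (Fin n)))
    (g : Fin m → ℝ) (ι : Fin m → Fin n) (k : Fin n) :
    ⟪∑ c, g c • b (ι c), b k⟫ = ∑ c, if ι c = k then g c else 0 := by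
  have hb := orthonormal_iff_ite.mp b.orthonormal
  rw [sum_inner]
  refine Finset.sum_congr rfl fun c _ => ?_
  rw [real_inner_smul_left, hb]
  split <;> simp

theorem stmt0 (dh H : ℕ) (hdh : 1 ≤ dh) (hH : 1 ≤ H) (r0 : ℝ)
    (b : OrthonormalBasis (Fin (2 * dh)) ℝ (EuclideanSpace ℝ (Fin (2 * dh))))
    (π : ℕ → Fin (dh + 1) → Bool) (h : ℕ) (hh1 : 1 ≤ h) (hhH : h ≤ H) :
    ∃ θ : EuclideanSpace ℝ (Fin (2 * dh)),
      (∀ (c : Fin (dh + 1)) (a : Bool),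
        detQ dh H r0 π h c a = ⟪θ, detPhi dh (⇑b) c a⟫) ∧
      θ = if h = H then r0 • ∑ j : Fin (2 * dh), b j
          else (∑ c : Fin dh,
                  (r0 * Real.sqrt dh ^ (H - h)) • b ⟨(c : ℕ), by have := c.isLt; omega⟩) +
               ∑ c : Fin dh,
                  detQ dh H r0 π h ⟨(c : ℕ), by have := c.isLt; omega⟩ true •
                    b ⟨(c : ℕ) + dh, by have := c.isLt; omega⟩ := by
  have hb := orthonormal_iff_ite.mp b.orthonormal
  have hdh0 : (0:ℝ) < dh := by exact_mod_cast hdh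
  have hs : Real.sqrt dh * Real.sqrt dh = (dh : ℝ) := Real.mul_self_sqrt hdh0.le
  have hs0 : Real.sqrt dh ≠ 0 := by positivity
  by_cases hhe : h = H
  · -- last level
    subst hhe
    refine ⟨r0 • ∑ j : Fin (2 * dh), b j, ?_, (if_pos rfl).symm⟩
    intro c a
    have key : ∀ k : Fin (2 * dh), ⟪r0 • ∑ j : Fin (2 * dh), b j, b k⟫ = r0 := by
      intro k
      rw [real_inner_smul_left, sum_inner]
      have : ∀ j : Fin (2*dh), ⟪b j, b k⟫ = if j = k then (1:ℝ) else 0 := fun j => hb j k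
      simp [this]
    have hQ : detQ dh h r0 π h c a = detReward dh h r0 h c := by
      simp [detQ, detQaux]
    rw [hQ]
    by_cases hc : (c : ℕ) < dh
    · rw [detPhi, dif_pos hc, detReward, if_pos rfl, if_neg (by omega)]
      cases a <;> simp [key]
    · have hcd : (c : ℕ) = dh := by omega
      rw [detPhi, dif_neg hc, detReward, if_pos rfl, if_pos hcd]
      rw [real_inner_smul_right, inner_sum]
      simp only [key, Finset.sum_const, Finset.card_univ, Fintype.card_fin, nsmul_eq_mul]
      field_simp
      linear_combination r0 * hs
  · -- h < H
    have hhlt : h < H := lt_of_le_of_ne hhH hhe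
    set θ : EuclideanSpace ℝ (Fin (2 * dh)) :=
      (∑ c : Fin dh,
          (r0 * Real.sqrt dh ^ (H - h)) • b ⟨(c : ℕ), by have := c.isLt; omega⟩) +
        ∑ c : Fin dh,
          detQ dh H r0 π h ⟨(c : ℕ), by have := c.isLt; omega⟩ true •
            b ⟨(c : ℕ) + dh, by have := c.isLt; omega⟩ with hθ
    refine ⟨θ, ?_, (if_neg hhe).symm⟩
    -- inner products with basis vectors
    have key1 : ∀ (c0 : ℕ) (hc0 : c0 < dh),
        ⟪θ, b ⟨c0, by omega⟩⟫ = r0 * Real.sqrt dh ^ (H - h) := by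
      intro c0 hc0
      rw [hθ, inner_add_left, sum_smul_inner, sum_smul_inner]
      rw [Finset.sum_eq_single (⟨c0, hc0⟩ : Fin dh), Finset.sum_eq_zero]
      · simp
      · intro c _
        refine if_neg fun hEq => ?_
        simp [Fin.ext_iff] at hEq
        omega
      · intro c _ hne
        refine if_neg fun hEq => hne ?_
        simp [Fin.ext_iff] at hEq
        exact Fin.ext hEq
      · intro hmem; exact absurd (Finset.mem_univ _) hmem
    have key2 : ∀ (c0 : ℕ) (hc0 : c0 < dh),
        ⟪θ, b ⟨c0 + dh, by omega⟩⟫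
          = detQ dh H r0 π h ⟨c0, by omega⟩ true := by
      intro c0 hc0
      rw [hθ, inner_add_left, sum_smul_inner, sum_smul_inner]
      rw [Finset.sum_eq_zero, Finset.sum_eq_single (⟨c0, hc0⟩ : Fin dh)]
      · simp
      · intro c _ hne
        refine if_neg fun hEq => hne ?_
        simp [Fin.ext_iff] at hEq
        exact Fin.ext (show (c : ℕ) = c0 by omega)
      · intro hmem; exact absurd (Finset.mem_univ _) hmem
      · intro c _
        refine if_neg fun hEq => ?_
        simp [Fin.ext_iff] at hEq
        omega
    -- value of Q at the special state
    have hts : H - h < H := by omega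
    obtain ⟨s, hsdef⟩ : ∃ s, H - h = s + 1 := ⟨H - h - 1, by omega⟩
    intro c a
    by_cases hc : (c : ℕ) < dh
    · rw [detPhi, dif_pos hc]
      cases a
      · -- a₁ : goes to special state
        rw [if_neg (by simp), key1 _ hc]
        rw [detQ, hsdef, detQaux]
        have hnext : detNext dh c false = ⟨dh, Nat.lt_succ_self dh⟩ := rfl
        rw [hnext, qaux_special dh H r0 π s (by omega)]
        have hr : detReward dh H r0 (H - (s + 1)) c = 0 := by
          have h1 : H - (s + 1) ≠ H := by omega
          have h2 : ¬((c : ℕ) = dh) := by omega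
          rw [detReward, if_neg h1, if_neg h2]
        rw [hr, ← hsdef, zero_add]
      · -- a₂ : coefficient matches
        rw [if_pos rfl, key2 _ hc]
    · have hcd : c = ⟨dh, Nat.lt_succ_self dh⟩ := Fin.ext (show (c : ℕ) = dh by omega)
      rw [detPhi, dif_neg hc, real_inner_smul_right, inner_sum]
      have : ∀ j : Fin dh,
          ⟪θ, b ⟨(j:ℕ), by have := j.isLt; omega⟩⟫ = r0 * Real.sqrt dh ^ (H - h) :=
        fun j => key1 j j.isLt
      simp only [this, Finset.sum_const, Finset.card_univ, Fintype.card_fin, nsmul_eq_mul]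
      rw [hcd, detQ, qaux_special dh H r0 π (H - h) hts, pow_succ]
      field_simp
      linear_combination r0 * hs
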